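/- Let K be an infinite field and V a finite-dimensional K-vector space with dim V = n. Then every GL(V)-equivariant linear map V^{⊗n} → V^{⊗n} (equivariant for the diagonal action) lies in the image of the group algebra K[Sₙ] acting by permuting tensor factors; i.e., End_{GL(V)}(V^{⊗n}) = K[Sₙ] acting by place permutations, and this map K[Sₙ] → End_{GL(V)}(V^{⊗n}) is bijective when dim V = n. -/

import Mathlib

open scoped TensorProduct

/-- The action of a permutation `σ ∈ Sₙ` on the `n`-th tensor power `V^{⊗n}`,
permuting the tensor factors. -/
noncomputable def permFactors (K : Type) [Field K] (V : Type) [AddCommGroup V] [Module K V]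
    (n : ℕ) (σ : Equiv.Perm (Fin n)) :
    (⨂[K] _ : Fin n, V) →ₗ[K] (⨂[K] _ : Fin n, V) :=
  (PiTensorProduct.reindex K (fun _ : Fin n => V) σ).toLinearMap

/-- The diagonal action of a linear map `g : V → V` on the tensor power `V^{⊗n}`. -/
noncomputable def diagPower (K : Type) [Field K] (V : Type) [AddCommGroup V] [Module K V]
    (n : ℕ) (g : V →ₗ[K] V) :
    (⨂[K] _ : Fin n, V) →ₗ[K] (⨂[K] _ : Fin n, V) :=
  PiTensorProduct.map (fun _ : Fin n => g)

open PiTensorProduct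

namespace SWaux

variable {K : Type} [Field K] {n : ℕ} {V : Type} [AddCommGroup V] [Module K V]

noncomputable def B (b : Module.Basis (Fin n) K V) (f : Fin n → Fin n) : ⨂[K] _ : Fin n, V :=
  tprod K fun i => b (f i)

noncomputable def phi (b : Module.Basis (Fin n) K V) (f : Fin n → Fin n) :
    (⨂[K] _ : Fin n, V) →ₗ[K] K :=
  PiTensorProduct.lift
    ((MultilinearMap.mkPiAlgebra K (Fin n) K).compLinearMap fun i => b.coord (f i))

lemma phi_tprod (b : Module.Basis (Fin n) K V) (f : Fin n → Fin n) (v : Fin n → V) :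
    phi b f (tprod K v) = ∏ i, b.repr (v i) (f i) := by
  simp [phi, Module.Basis.coord_apply]

lemma phi_B (b : Module.Basis (Fin n) K V) (f g : Fin n → Fin n) :
    phi b f (B b g) = if f = g then 1 else 0 := by
  rw [B, phi_tprod]
  by_cases h : f = g
  · subst h; simp
  · rw [if_neg h]
    obtain ⟨i, hi⟩ := Function.ne_iff.mp h
    refine Finset.prod_eq_zero (Finset.mem_univ i) ?_
    simp [Module.Basis.repr_self, Finsupp.single_apply, Ne.symm hi]

lemma diagPower_tprod (g : V →ₗ[K] V) (v : Fin n → V) :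
    diagPower K V n g (tprod K v) = tprod K fun i => g (v i) :=
  PiTensorProduct.map_tprod _ _

lemma permFactors_tprod (σ : Equiv.Perm (Fin n)) (v : Fin n → V) :
    permFactors K V n σ (tprod K v) = tprod K fun i => v (σ.symm i) :=
  PiTensorProduct.reindex_tprod _ _

lemma tprod_expand (b : Module.Basis (Fin n) K V) (v : Fin n → V) :
    tprod K v = ∑ f : Fin n → Fin n, (∏ i, b.repr (v i) (f i)) • B b f := by
  have h1 : (tprod K (s := fun _ : Fin n => V)) v
      = tprod K fun i => ∑ j, b.repr (v i) j • b j := by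
    congr 1; funext i; rw [b.sum_repr (v i)]
  rw [h1, MultilinearMap.map_sum]
  exact Finset.sum_congr rfl fun f _ => MultilinearMap.map_smul_univ _ _ _

lemma phi_sum (b : Module.Basis (Fin n) K V) (c : (Fin n → Fin n) → K) (g : Fin n → Fin n) :
    phi b g (∑ f : Fin n → Fin n, c f • B b f) = c g := by
  rw [map_sum]
  simp only [map_smul, phi_B, smul_eq_mul, mul_ite, mul_one, mul_zero]
  simp [Finset.sum_ite_eq]

lemma eq_zero_of_phi (b : Module.Basis (Fin n) K V) (x : ⨂[K] _ : Fin n, V)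
    (h : ∀ f, phi b f x = 0) : x = 0 := by
  have hx : x ∈ Submodule.span K (Set.range (B b)) := by
    suffices hs : Submodule.span K (Set.range (B b)) = ⊤ by rw [hs]; trivial
    rw [Submodule.eq_top_iff']
    intro y
    induction y using PiTensorProduct.induction_on with
    | smul_tprod r v =>
        refine Submodule.smul_mem _ r ?_
        rw [tprod_expand b v]
        exact Submodule.sum_mem _ fun f _ =>
          Submodule.smul_mem _ _ (Submodule.subset_span ⟨f, rfl⟩)
    | add x y hx hy => exact Submodule.add_mem _ hx hy
  obtain ⟨c, hc⟩ := (Submodule.mem_span_range_iff_exists_fun K).mp hx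
  rw [← hc]
  have : ∀ g, c g = 0 := fun g => by rw [← phi_sum b c g, hc, h]
  simp [this]


lemma permFactors_tprod' (σ : Equiv.Perm (Fin n)) (v : Fin n → V) :
    permFactors K V n σ (tprod K v) = tprod K fun i => v (σ.symm i) :=
  PiTensorProduct.reindex_tprod _ _

noncomputable def Phi (c : Equiv.Perm (Fin n) →₀ K) :
    (⨂[K] _ : Fin n, V) →ₗ[K] (⨂[K] _ : Fin n, V) :=
  c.sum fun σ a => a • permFactors K V n σ

lemma Phi_apply (c : Equiv.Perm (Fin n) →₀ K) (x : ⨂[K] _ : Fin n, V) :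
    Phi c x = ∑ σ ∈ c.support, c σ • permFactors K V n σ x := by
  rw [Phi, Finsupp.sum, LinearMap.coe_sum, Finset.sum_apply]
  simp

lemma comm_perm (σ : Equiv.Perm (Fin n)) (g : V →ₗ[K] V) :
    permFactors K V n σ ∘ₗ diagPower K V n g
      = diagPower K V n g ∘ₗ permFactors K V n σ := by
  apply PiTensorProduct.ext
  apply MultilinearMap.ext
  intro v
  simp [permFactors_tprod', diagPower, PiTensorProduct.map_tprod]

lemma comm_Phi (c : Equiv.Perm (Fin n) →₀ K) (g : V →ₗ[K] V) :
    Phi c ∘ₗ diagPower K V n g = diagPower K V n g ∘ₗ Phi c := by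
  apply LinearMap.ext
  intro x
  rw [LinearMap.comp_apply, LinearMap.comp_apply, Phi_apply, Phi_apply, map_sum]
  refine Finset.sum_congr rfl fun σ _ => ?_
  rw [map_smul]
  have := congrArg (fun h => h x) (comm_perm σ g (K := K) (n := n) (V := V))
  simpa using congrArg (fun y => c σ • y) this

variable {K : Type} [Field K] {n : ℕ} {V : Type} [AddCommGroup V] [Module K V]

lemma toLin_basis (b : Module.Basis (Fin n) K V) (M : Matrix (Fin n) (Fin n) K) (i : Fin n) :
    Matrix.toLin b b M (b i) = ∑ j, M j i • b j :=
  Matrix.toLin_self _ _ _ _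

lemma toLin_diag (b : Module.Basis (Fin n) K V) (d : Fin n → K) (i : Fin n) :
    Matrix.toLin b b (Matrix.diagonal d) (b i) = d i • b i := by
  rw [toLin_basis]
  simp [Matrix.diagonal_apply, ite_smul]

lemma diagPower_toLin_diag (b : Module.Basis (Fin n) K V) (d : Fin n → K) (f : Fin n → Fin n) :
    diagPower K V n (Matrix.toLin b b (Matrix.diagonal d)) (B b f)
      = (∏ i, d (f i)) • B b f := by
  rw [B, diagPower_tprod]
  have : (tprod K (s := fun _ : Fin n => V)) (fun i => Matrix.toLin b b (Matrix.diagonal d) (b (f i)))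
      = tprod K fun i => d (f i) • b (f i) := by
    congr 1; funext i; rw [toLin_diag]
  rw [this]
  exact MultilinearMap.map_smul_univ _ _ _

/-- The linear equivalence attached to a matrix with invertible determinant. -/
noncomputable def equivOfMat (b : Module.Basis (Fin n) K V) (M : Matrix (Fin n) (Fin n) K)
    (h : IsUnit M.det) : V ≃ₗ[K] V :=
  LinearEquiv.ofIsUnitDet (f := Matrix.toLin b b M) (v := b) (v' := b)
    (by rwa [LinearMap.toMatrix_toLin])

lemma equivOfMat_coe (b : Module.Basis (Fin n) K V) (M : Matrix (Fin n) (Fin n) K)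
    (h : IsUnit M.det) : (equivOfMat b M h).toLinearMap = Matrix.toLin b b M :=
  LinearEquiv.coe_ofIsUnitDet _

variable {K : Type} [Field K] {n : ℕ} {V : Type} [AddCommGroup V] [Module K V]

lemma tprod_expand' (b : Module.Basis (Fin n) K V) (a : (Fin n × Fin n) → K) :
    (tprod K (s := fun _ : Fin n => V)) (fun i => ∑ j, a (j, i) • b j)
      = ∑ f : Fin n → Fin n, (∏ i, a (f i, i)) • B b f := by
  rw [MultilinearMap.map_sum]
  exact Finset.sum_congr rfl fun f _ => MultilinearMap.map_smul_univ _ _ _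

open MvPolynomial in
lemma key_poly [Infinite K] (b : Module.Basis (Fin n) K V)
    (T' : (⨂[K] _ : Fin n, V) →ₗ[K] (⨂[K] _ : Fin n, V))
    (hc : ∀ g : V ≃ₗ[K] V,
      T' ∘ₗ diagPower K V n g.toLinearMap = diagPower K V n g.toLinearMap ∘ₗ T')
    (h0 : T' (B b id) = 0) : T' = 0 := by
  classical
  -- the key vanishing statement
  have main : ∀ (f' f₀ : Fin n → Fin n), phi b f' (T' (B b f₀)) = 0 := by
    intro f' f₀
    set P : MvPolynomial (Fin n × Fin n) K :=
      ∑ f : Fin n → Fin n, (∏ i, X (f i, i)) * C (phi b f' (T' (B b f))) with hP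
    have evalP : ∀ a : (Fin n × Fin n) → K,
        eval a P = phi b f' (T' (tprod K (s := fun _ : Fin n => V)
          fun i => ∑ j, a (j, i) • b j)) := by
      intro a
      rw [tprod_expand' b a, hP]
      simp only [map_sum, map_smul, _root_.map_mul, map_prod, eval_C, eval_X, smul_eq_mul]
    have hvan : ∀ a : (Fin n × Fin n) → K,
        (Matrix.of fun i j => a (i, j)).det ≠ 0 → eval a P = 0 := by
      intro a hdet
      set M : Matrix (Fin n) (Fin n) K := Matrix.of fun i j => a (i, j) with hM
      set u : V ≃ₗ[K] V := equivOfMat b M (isUnit_iff_ne_zero.mpr hdet) with hu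
      have htp : (tprod K (s := fun _ : Fin n => V)) (fun i => ∑ j, a (j, i) • b j)
          = diagPower K V n u.toLinearMap (B b id) := by
        rw [B, diagPower_tprod]
        congr 1
        funext i
        rw [hu, equivOfMat_coe, toLin_basis]
        rfl
      rw [evalP, htp]
      have := congrArg (fun h => h (B b id)) (hc u)
      simp only [LinearMap.comp_apply] at this
      rw [this, h0, map_zero, map_zero]
    -- the determinant polynomial
    set D : MvPolynomial (Fin n × Fin n) K :=
      (Matrix.of fun i j => (X (i, j) : MvPolynomial (Fin n × Fin n) K)).det with hD
    have evalD : ∀ a : (Fin n × Fin n) → K,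
        eval a D = (Matrix.of fun i j => a (i, j)).det := by
      intro a
      rw [hD, RingHom.map_det]
      congr 1
      ext i j
      simp [Matrix.map_apply]
    have hDP : D * P = 0 := by
      apply MvPolynomial.funext
      intro a
      rw [_root_.map_mul, map_zero, evalD]
      by_cases h : (Matrix.of fun i j => a (i, j)).det = 0
      · rw [h, zero_mul]
      · rw [hvan a h, mul_zero]
    have hDne : D ≠ 0 := by
      intro h
      have := congrArg (eval fun p : Fin n × Fin n => if p.1 = p.2 then (1 : K) else 0) h
      rw [evalD, map_zero] at this
      have h1 : (Matrix.of fun i j =>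
          if i = j then (1 : K) else 0) = (1 : Matrix (Fin n) (Fin n) K) := by
        ext i j; simp [Matrix.one_apply]
      rw [h1, Matrix.det_one] at this
      exact one_ne_zero this
    have hPzero : P = 0 := by
      rcases mul_eq_zero.mp hDP with h | h
      · exact absurd h hDne
      · exact h
    have := congrArg (eval fun p : Fin n × Fin n => if p.1 = f₀ p.2 then (1 : K) else 0) hPzero
    rw [map_zero, evalP] at this
    rw [← this]
    congr 2
    rw [B]
    congr 1
    funext i
    simp [ite_smul]
  have hBzero : ∀ f₀, T' (B b f₀) = 0 := fun f₀ => eq_zero_of_phi b _ (fun f' => main f' f₀)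
  apply LinearMap.ext
  intro x
  rw [LinearMap.zero_apply]
  induction x using PiTensorProduct.induction_on with
  | smul_tprod r v =>
      rw [map_smul, tprod_expand b v, map_sum]
      simp only [map_smul, hBzero, smul_zero]
      simp
  | add x y hx hy => rw [map_add, hx, hy, add_zero]

variable {K : Type} [Field K] {n : ℕ} {V : Type} [AddCommGroup V] [Module K V]

lemma exists_repr (b : Module.Basis (Fin n) K V) (x : ⨂[K] _ : Fin n, V) :
    ∃ c : (Fin n → Fin n) → K, ∑ f : Fin n → Fin n, c f • B b f = x := by
  classical
  refine (Submodule.mem_span_range_iff_exists_fun K).mp ?_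
  suffices hs : Submodule.span K (Set.range (B b)) = ⊤ by rw [hs]; trivial
  rw [Submodule.eq_top_iff']
  intro y
  induction y using PiTensorProduct.induction_on with
  | smul_tprod r v =>
      refine Submodule.smul_mem _ r ?_
      rw [tprod_expand b v]
      exact Submodule.sum_mem _ fun f _ =>
        Submodule.smul_mem _ _ (Submodule.subset_span ⟨f, rfl⟩)
  | add x y hx hy => exact Submodule.add_mem _ hx hy

lemma permFactors_B (b : Module.Basis (Fin n) K V) (σ : Equiv.Perm (Fin n)) :
    permFactors K V n σ (B b id) = B b ⇑σ.symm := by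
  rw [B, permFactors_tprod]; rfl

lemma phi_Phi (b : Module.Basis (Fin n) K V) (c : Equiv.Perm (Fin n) →₀ K) (g : Fin n → Fin n) :
    phi b g (Phi c (B b id))
      = ∑ σ : Equiv.Perm (Fin n), c σ * (if g = ⇑σ.symm then 1 else 0) := by
  classical
  rw [Phi_apply, map_sum]
  rw [Finset.sum_subset (Finset.subset_univ c.support)]
  · refine Finset.sum_congr rfl fun σ _ => ?_
    rw [map_smul, permFactors_B, phi_B, smul_eq_mul]
  · intro σ _ hσ
    rw [Finsupp.notMem_support_iff.mp hσ, zero_smul, map_zero]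

lemma phi_Phi_perm (b : Module.Basis (Fin n) K V) (c : Equiv.Perm (Fin n) →₀ K)
    (τ : Equiv.Perm (Fin n)) :
    phi b ⇑τ.symm (Phi c (B b id)) = c τ := by
  classical
  rw [phi_Phi]
  have hcond : ∀ σ : Equiv.Perm (Fin n), (⇑τ.symm = ⇑σ.symm) = (σ = τ) := by
    intro σ
    apply propext
    constructor
    · intro h
      have h2 : τ.symm = σ.symm := Equiv.coe_fn_injective h
      have := congrArg Equiv.symm h2
      simpa using this.symm
    · rintro rfl; rfl
  simp_rw [hcond]
  simp [Finset.sum_ite_eq', mul_ite]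

variable {K : Type} [Field K] {n : ℕ} {V : Type} [AddCommGroup V] [Module K V]

/-- Step A: coefficients of `T x₀` at non-bijective basis tensors vanish. -/
lemma coeff_vanish [Infinite K] (b : Module.Basis (Fin n) K V)
    (T : (⨂[K] _ : Fin n, V) →ₗ[K] (⨂[K] _ : Fin n, V))
    (hT : ∀ g : V ≃ₗ[K] V,
      T ∘ₗ diagPower K V n g.toLinearMap = diagPower K V n g.toLinearMap ∘ₗ T)
    (c0 : (Fin n → Fin n) → K) (hc0 : ∑ f : Fin n → Fin n, c0 f • B b f = T (B b id))
    (f : Fin n → Fin n) (hf : ¬ Function.Bijective f) : c0 f = 0 := by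
  classical
  have hns : ¬ Function.Surjective f := fun hs => hf (Finite.surjective_iff_bijective.mp hs)
  rw [Function.Surjective] at hns
  push_neg at hns
  obtain ⟨j, hj⟩ := hns
  obtain ⟨s, hs⟩ := Infinite.exists_notMem_finset ({0, 1} : Finset K)
  simp only [Finset.mem_insert, Finset.mem_singleton, not_or] at hs
  obtain ⟨hs0, hs1⟩ := hs
  set d : Fin n → K := fun i => if i = j then s else 1 with hd
  have hdet : IsUnit (Matrix.diagonal d).det := by
    rw [Matrix.det_diagonal]
    refine isUnit_iff_ne_zero.mpr (Finset.prod_ne_zero_iff.mpr fun i _ => ?_)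
    by_cases h : i = j <;> simp [hd, h, hs0]
  set u : V ≃ₗ[K] V := equivOfMat b (Matrix.diagonal d) hdet with hu
  have hDu : ∀ f' : Fin n → Fin n,
      diagPower K V n u.toLinearMap (B b f') = (∏ i, d (f' i)) • B b f' := by
    intro f'
    rw [hu, equivOfMat_coe, diagPower_toLin_diag]
  have key := congrArg (fun h => h (B b id)) (hT u)
  simp only [LinearMap.comp_apply] at key
  -- LHS : T (diagPower u x₀) = s • T x₀
  have hprod : (∏ i, d (id i)) = s := by
    rw [Finset.prod_eq_single j (fun i _ hij => by simp [hd, hij]) (by simp)]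
    simp [hd]
  rw [hDu id, hprod, map_smul] at key
  have hone : (∏ i, d (f i)) = 1 := by
    refine Finset.prod_eq_one fun i _ => ?_
    simp [hd, hj i]
  have key2 := congrArg (phi b f) key
  rw [← hc0, map_smul, map_sum, map_sum] at key2
  simp only [map_smul, hDu, smul_smul, phi_B, smul_eq_mul, mul_ite, mul_one, mul_zero,
    Finset.sum_ite_eq, Finset.mem_univ, if_true] at key2
  rw [phi_sum b (fun x => c0 x * ∏ i, d (x i)) f, hone, mul_one] at key2
  by_contra h
  exact hs1 (mul_right_cancel₀ h (key2.trans (one_mul (c0 f)).symm))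

end SWaux

/-- Schur–Weyl duality when `dim V = n` over an infinite field: the map from the group
algebra `K[Sₙ]` to endomorphisms of `V^{⊗n}` by place permutations is injective, and its
range is exactly the `GL(V)`-equivariant endomorphisms. -/
theorem stmt6 (K : Type) [Field K] [Infinite K] (n : ℕ) (V : Type) [AddCommGroup V]
    [Module K V] [FiniteDimensional K V] (hdim : Module.finrank K V = n) :
    Function.Injective
      (fun c : Equiv.Perm (Fin n) →₀ K => c.sum fun σ a => a • permFactors K V n σ) ∧
    Set.range
      (fun c : Equiv.Perm (Fin n) →₀ K => c.sum fun σ a => a • permFactors K V n σ) =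
      {T : (⨂[K] _ : Fin n, V) →ₗ[K] (⨂[K] _ : Fin n, V) |
        ∀ g : V ≃ₗ[K] V,
          T ∘ₗ diagPower K V n g.toLinearMap = diagPower K V n g.toLinearMap ∘ₗ T} := by
  classical
  have b : Module.Basis (Fin n) K V := Module.finBasisOfFinrankEq K V hdim
  have hPhi : (fun c : Equiv.Perm (Fin n) →₀ K => c.sum fun σ a => a • permFactors K V n σ)
      = fun c => SWaux.Phi c := rfl
  constructor
  · rw [hPhi]
    intro c₁ c₂ h
    ext τ
    have := congrArg (fun T => SWaux.phi b ⇑τ.symm (T (SWaux.B b id))) h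
    simpa only [SWaux.phi_Phi_perm] using this
  · ext T
    simp only [Set.mem_range, Set.mem_setOf_eq, hPhi]
    constructor
    · rintro ⟨c, rfl⟩ g
      exact SWaux.comm_Phi c g.toLinearMap
    · intro hT
      obtain ⟨c0, hc0⟩ := SWaux.exists_repr b (T (SWaux.B b id))
      have hA : ∀ f, ¬ Function.Bijective f → c0 f = 0 :=
        fun f hf => SWaux.coeff_vanish b T hT c0 hc0 f hf
      set c1 : Equiv.Perm (Fin n) →₀ K :=
        Finsupp.equivFunOnFinite.symm fun τ => c0 ⇑τ.symm with hc1
      have hc1app : ∀ τ : Equiv.Perm (Fin n), c1 τ = c0 ⇑τ.symm := fun τ => rfl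
      have hx0 : SWaux.Phi c1 (SWaux.B b id) = T (SWaux.B b id) := by
        rw [← sub_eq_zero]
        apply SWaux.eq_zero_of_phi b
        intro g
        rw [map_sub, SWaux.phi_Phi, ← hc0, SWaux.phi_sum]
        by_cases hg : Function.Bijective g
        · set τ : Equiv.Perm (Fin n) := (Equiv.ofBijective g hg).symm with hτ
          have hgτ : g = ⇑τ.symm := by rw [hτ, Equiv.symm_symm]; rfl
          have hcond : ∀ σ : Equiv.Perm (Fin n), (g = ⇑σ.symm) = (σ = τ) := by
            intro σ
            apply propext
            constructor
            · intro h
              have h2 : τ.symm = σ.symm := Equiv.coe_fn_injective (hgτ.symm.trans h)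
              have := congrArg Equiv.symm h2
              simpa using this.symm
            · rintro rfl; exact hgτ
          simp_rw [hcond, hc1app, mul_ite, mul_one, mul_zero]
          rw [Finset.sum_ite_eq' Finset.univ τ (fun σ => c0 ⇑σ.symm)]
          simp [← hgτ]
        · have hcond : ∀ σ : Equiv.Perm (Fin n), (g = ⇑σ.symm) = False := by
            intro σ
            apply propext
            simp only [iff_false]
            intro h
            exact hg (h ▸ σ.symm.bijective)
          simp_rw [hcond]
          simp [hA g hg]
      have hcomm1 : ∀ g : V ≃ₗ[K] V,
          (T - SWaux.Phi c1) ∘ₗ diagPower K V n g.toLinearMap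
            = diagPower K V n g.toLinearMap ∘ₗ (T - SWaux.Phi c1) := by
        intro g
        rw [LinearMap.sub_comp, LinearMap.comp_sub, hT g, SWaux.comm_Phi]
      have h0 : (T - SWaux.Phi c1 : (⨂[K] _ : Fin n, V) →ₗ[K] (⨂[K] _ : Fin n, V))
          (SWaux.B b id) = 0 := by
        rw [LinearMap.sub_apply, hx0, sub_self]
      have hfin := SWaux.key_poly b _ hcomm1 h0
      exact ⟨c1, (sub_eq_zero.mp hfin).symm⟩
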